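/- Under the conditions of the multivariate power theorem (d ∈ ℕ, τ ∈ ℝ, σ, γ, λ > 0, θ > 1, P ∈ P_Mon,d(σ) ∩ P_Reg,d(τ, θ, γ, λ) with covariate marginal μ and regression function η, n ∈ ℕ, α ∈ (0,1), D ∼ P^n, and with C ≥ 1 the constant from that theorem depending only on (d, θ)), if m₀ := n ∧ ⌈n λ²/σ²⌉, then E_P μ(X_τ(η) \ Â^{ISS}_{σ,τ,α,m₀}(D)) ≤ 1 ∧ 4C { (σ²/(n λ²) · log_+(n λ² log_+ n / (σ² α)))^{1/(2γ+d)} + (log_+ n / n)^{1/d} }. -/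
import Mathlib


open MeasureTheory ProbabilityTheory Real Set
open scoped ENNReal Classical

noncomputable section

/-- `log_+ x := log (x ∨ e)`. -/
def logp (x : ℝ) : ℝ := Real.log (max x (Real.exp 1))

/-- The σ-algebra generated by the covariate `X = Prod.fst`. -/
def mX (d : ℕ) : MeasurableSpace ((Fin d → ℝ) × ℝ) :=
  MeasurableSpace.comap Prod.fst inferInstance

/-- `η` is (a version of) the regression function `x ↦ E[Y | X = x]` of `P`. -/
def IsRegFn (d : ℕ) (P : Measure ((Fin d → ℝ) × ℝ)) (η : (Fin d → ℝ) → ℝ) : Prop :=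
  Measurable η ∧ (fun p => η p.1) =ᵐ[P] P[fun p => p.2 | mX d]

/-- Conditionally on `X`, `Y - η X` is sub-Gaussian with variance parameter `σ²`. -/
def CondSubG (d : ℕ) (σ : ℝ) (P : Measure ((Fin d → ℝ) × ℝ)) (η : (Fin d → ℝ) → ℝ) : Prop :=
  ∀ t : ℝ, Integrable (fun p => Real.exp (t * (p.2 - η p.1))) P ∧
    (P[fun p => Real.exp (t * (p.2 - η p.1)) | mX d])
      ≤ᵐ[P] fun _ => Real.exp (σ ^ 2 * t ^ 2 / 2)

/-- The class `P_{Mon,d}(σ)`, as a predicate on the pair `(P, η)`. -/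
def PMon (d : ℕ) (σ : ℝ) (P : Measure ((Fin d → ℝ) × ℝ)) (η : (Fin d → ℝ) → ℝ) : Prop :=
  IsProbabilityMeasure P ∧ IsRegFn d P η ∧ Monotone η ∧ CondSubG d σ P η

/-- The margin class `P_{Mar,d}(τ, β, ν)`, as a predicate on the pair `(P, η)`. -/
def PMar (d : ℕ) (τ β ν : ℝ) (P : Measure ((Fin d → ℝ) × ℝ)) (η : (Fin d → ℝ) → ℝ) : Prop :=
  IsProbabilityMeasure P ∧ IsRegFn d P η ∧
    ∀ ξ : ℝ, ξ ∈ Set.Ioc (0 : ℝ) 1 →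
      (P.map Prod.fst) (η ⁻¹' Set.Icc τ (τ + ν * ξ ^ β)) ≤ ENNReal.ofReal ξ

/-- Support of a Borel measure: the points all of whose open neighbourhoods have
positive measure. -/
def measSupport {α : Type*} [TopologicalSpace α] [MeasurableSpace α] (μ : Measure α) : Set α :=
  {x | ∀ U : Set α, IsOpen U → x ∈ U → 0 < μ U}

/-- The regularity class `P_{Reg,d}(τ, θ, γ, λ)`, as a predicate on the pair `(P, η)`. -/
def PReg (d : ℕ) (τ θ γ lam : ℝ) (P : Measure ((Fin d → ℝ) × ℝ)) (η : (Fin d → ℝ) → ℝ) : Prop :=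
  IsProbabilityMeasure P ∧ IsRegFn d P η ∧
    ∀ x ∈ {x | τ ≤ η x} ∩ measSupport (P.map Prod.fst), ∀ r : ℝ, r ∈ Set.Ioc (0:ℝ) 1 →
      (ENNReal.ofReal (θ⁻¹ * r ^ d) ≤ (P.map Prod.fst) (Metric.closedBall x r) ∧
        (P.map Prod.fst) (Metric.closedBall x r) ≤ ENNReal.ofReal (θ * (2 * r) ^ d)) ∧
      (Metric.closedBall x r ∩ {z | τ + lam * r ^ γ ≤ η z}).Nonempty

/-- Indices `i` with `X i ≼ x`, ordered by increasing sup-norm distance to `x`,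
ties broken by the original index ordering. -/
def nnOrder {d n : ℕ} (X : Fin n → (Fin d → ℝ)) (x : Fin d → ℝ) : List (Fin n) :=
  List.insertionSort
    (fun i j => ‖X i - x‖ < ‖X j - x‖ ∨ (‖X i - x‖ = ‖X j - x‖ ∧ i ≤ j))
    ((List.finRange n).filter (fun i => decide (X i ≤ x)))

/-- The martingale sums `S_k = ∑_{j=1}^k (Y_{(j)}(x) - τ)/σ`. -/
def Smart {d n : ℕ} (σ τ : ℝ) (D : Fin n → (Fin d → ℝ) × ℝ) (x : Fin d → ℝ) (k : ℕ) : ℝ :=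
  ((((nnOrder (fun i => (D i).1) x).take k).map (fun i => ((D i).2 - τ) / σ)).sum)

/-- The anytime-valid martingale p-value `p̂_{σ,τ}(x, D)`. -/
def phat {d n : ℕ} (σ τ : ℝ) (D : Fin n → (Fin d → ℝ) × ℝ) (x : Fin d → ℝ) : ℝ :=
  ((List.range (nnOrder (fun i => (D i).1) x).length).map (fun k =>
      5.2 * Real.exp (-(max (Smart σ τ D x (k + 1)) 0) ^ 2 / (2.0808 * (k + 1))
        + Real.log (Real.log (2 * (k + 1))) / 0.72))).foldr min 1

/-- One iteration of the DAG testing procedure `R^ISS`. Edges point from parents to children: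
`E a b` means `a` is a parent of `b`; `F` is the weight-one (polyforest) subrelation. -/
def RISSstep {I : Type*} [Fintype I] (E F : I → I → Prop) (α : ℝ) (p : I → ℝ)
    (R : Finset I) : Finset I :=
  let SL : Finset I := Finset.univ.filter (fun i => (∀ j, ¬ F i j) ∧ i ∉ R)
  let SC : Finset I := Finset.univ.filter (fun i => i ∉ R ∧ ∀ j, F j i → j ∈ R)
  let budget : I → ℝ := fun i =>
    if i ∈ SC then
      ((SL.filter (fun j => j = i ∨ Relation.TransGen F i j)).card : ℝ) * α / (SL.card : ℝ)
    else 0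
  let Il : Finset I := Finset.univ.filter (fun i => p i ≤ budget i)
  if Il = ∅ then R
  else R ∪ Il ∪ Finset.univ.filter (fun i => ∃ j ∈ Il, Relation.TransGen E i j)

/-- The DAG testing procedure `R^ISS_α` applied to a polyforest-weighted DAG `(I, E, w)`
(represented by the edge relation `E` and the weight-one subrelation `F`) and p-values `p`. -/
def RISS {I : Type*} [Fintype I] (E F : I → I → Prop) (α : ℝ) (p : I → ℝ) : Finset I :=
  (RISSstep E F α p)^[Fintype.card I] ∅

/-- Edge relation of the DAG induced by the covariate points `z`. -/
def indE {d m : ℕ} (z : Fin m → (Fin d → ℝ)) (i0 i1 : Fin m) : Prop :=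
  i0 ≠ i1 ∧ z i1 ≤ z i0 ∧ ∀ i2, z i1 ≤ z i2 → z i2 ≤ z i0 →
    (z i2 = z i0 ∧ i0 ≤ i2) ∨ (z i2 = z i1 ∧ i2 ≤ i1)

/-- Edge relation of the induced polyforest: among the induced-DAG parents of `i1`, keep the one
of minimal sup-norm distance to `z i1`, ties broken by smallest index. -/
def indF {d m : ℕ} (z : Fin m → (Fin d → ℝ)) (i0 i1 : Fin m) : Prop :=
  indE z i0 i1 ∧ ∀ i, indE z i i1 →
    (‖z i0 - z i1‖ < ‖z i - z i1‖ ∨ (‖z i0 - z i1‖ = ‖z i - z i1‖ ∧ i0 ≤ i))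

/-- The selection set `Â^{ISS}_{σ,τ,α,m}(D)`: the upper hull of the covariate points (among the
first `m` data points) whose hypotheses are rejected by `R^ISS` applied to the induced
polyforest-weighted DAG of `(X_1, …, X_m)` and the martingale p-values `p̂_{σ,τ}(X_i, D)`. -/
def AISS {d n : ℕ} (σ τ α : ℝ) (m : ℕ) (hm : m ≤ n)
    (D : Fin n → (Fin d → ℝ) × ℝ) : Set (Fin d → ℝ) :=
  let z : Fin m → (Fin d → ℝ) := fun i => (D (Fin.castLE hm i)).1
  {x | ∃ i ∈ RISS (indE z) (indF z) α (fun i => phat σ τ D (z i)), z i ≤ x}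

/-- `A` is a valid data-dependent selection set at level `α` for the class `PC`:
it is jointly measurable and satisfies the Type I error guarantee over `PC`. -/
def SelValid (d n : ℕ) (τ α : ℝ)
    (PC : Measure ((Fin d → ℝ) × ℝ) → ((Fin d → ℝ) → ℝ) → Prop)
    (A : (Fin n → (Fin d → ℝ) × ℝ) → Set (Fin d → ℝ)) : Prop :=
  MeasurableSet {q : (Fin n → (Fin d → ℝ) × ℝ) × (Fin d → ℝ) | q.2 ∈ A q.1} ∧
  ∀ P η, PC P η →
    ENNReal.ofReal (1 - α) ≤ (Measure.pi fun _ : Fin n => P) {ω | A ω ⊆ {x | τ ≤ η x}}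

end


lemma one_le_logp (x : ℝ) : 1 ≤ logp x := by
  have h := Real.log_le_log (Real.exp_pos 1) (le_max_right x (Real.exp 1))
  rw [Real.log_exp] at h
  exact h

lemma logp_pos (x : ℝ) : 0 < logp x := lt_of_lt_of_le one_pos (one_le_logp x)

lemma logp_mono {x y : ℝ} (h : x ≤ y) : logp x ≤ logp y :=
  Real.log_le_log (lt_of_lt_of_le (Real.exp_pos 1) (le_max_right _ _))
    (max_le_max h le_rfl)

lemma logp_two_mul {x : ℝ} (hx : 0 < x) : logp (2 * x) ≤ 2 * logp x := by
  rcases le_or_gt (2 * x) (Real.exp 1) with h | h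
  · rw [logp, max_eq_right h, Real.log_exp]
    nlinarith [one_le_logp x]
  · rw [logp, max_eq_left h.le, Real.log_mul (by norm_num) (ne_of_gt hx)]
    have h2 : Real.log 2 < 0.6931471808 := Real.log_two_lt_d9
    have h3 : Real.log x ≤ logp x :=
      Real.log_le_log hx (le_max_left _ _)
    nlinarith [one_le_logp x]

set_option maxHeartbeats 1000000 in
/-- Corollary 1: if `C ≥ 1` is a constant (depending only on `(d, θ)`) for which the
expectation bound of the multivariate power theorem holds, then with the choice
`m₀ = n ∧ ⌈n λ²/σ²⌉` the stated regret bound with constant `4C` holds. -/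
theorem statement7 (d : ℕ) (hd : 0 < d) (θ : ℝ) (hθ : 1 < θ) (C : ℝ) (hC1 : 1 ≤ C)
    (hC : ∀ (τ σ γ lam : ℝ), 0 < σ → 0 < γ → 0 < lam →
      ∀ (P : Measure ((Fin d → ℝ) × ℝ)) (η : (Fin d → ℝ) → ℝ),
        PMon d σ P η → PReg d τ θ γ lam P η →
      ∀ (n : ℕ), 0 < n → ∀ (α : ℝ), α ∈ Set.Ioo (0 : ℝ) 1 →
      ∀ (m : ℕ) (_ : 1 ≤ m) (hm : m ≤ n),
        ∫⁻ ω, (P.map Prod.fst) ({x | τ ≤ η x} \ AISS σ τ α m hm ω)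
            ∂(Measure.pi fun _ : Fin n => P)
          ≤ ENNReal.ofReal (min 1 (C *
              ((σ ^ 2 / ((n : ℝ) * lam ^ 2) * logp ((m : ℝ) * logp (n : ℝ) / α))
                  ^ (1 / (2 * γ + (d : ℝ)))
                + (logp (m : ℝ) / (m : ℝ)) ^ (1 / (d : ℝ)))))) :
    ∀ (τ σ γ lam : ℝ), 0 < σ → 0 < γ → 0 < lam →
    ∀ (P : Measure ((Fin d → ℝ) × ℝ)) (η : (Fin d → ℝ) → ℝ),
      PMon d σ P η → PReg d τ θ γ lam P η →
    ∀ (n : ℕ), 0 < n → ∀ (α : ℝ), α ∈ Set.Ioo (0 : ℝ) 1 →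
      ∫⁻ ω, (P.map Prod.fst) ({x | τ ≤ η x} \
            AISS σ τ α (min n ⌈(n : ℝ) * lam ^ 2 / σ ^ 2⌉₊) (min_le_left _ _) ω)
          ∂(Measure.pi fun _ : Fin n => P)
        ≤ ENNReal.ofReal (min 1 (4 * C *
            ((σ ^ 2 / ((n : ℝ) * lam ^ 2)
                * logp ((n : ℝ) * lam ^ 2 * logp (n : ℝ) / (σ ^ 2 * α)))
                ^ (1 / (2 * γ + (d : ℝ)))
              + (logp (n : ℝ) / (n : ℝ)) ^ (1 / (d : ℝ))))) := by
  intro τ σ γ lam hσ hγ hlam P η hMon hReg n hn α hα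
  have hnR : (0:ℝ) < n := Nat.cast_pos.mpr hn
  set ρ : ℝ := (n : ℝ) * lam ^ 2 / σ ^ 2 with hρdef
  have hρ : 0 < ρ := by positivity
  set m₀ : ℕ := min n ⌈ρ⌉₊ with hm₀def
  have hm1 : 1 ≤ m₀ := le_min hn (Nat.one_le_ceil_iff.mpr hρ)
  have hmn : m₀ ≤ n := min_le_left _ _
  have key := hC τ σ γ lam hσ hγ hlam P η hMon hReg n hn α hα m₀ hm1 hmn
  refine le_trans key (ENNReal.ofReal_le_ofReal ?_)
  -- notation
  set e1 : ℝ := 1 / (2 * γ + (d : ℝ)) with he1def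
  set e2 : ℝ := 1 / (d : ℝ) with he2def
  have hdR : (1:ℝ) ≤ (d:ℝ) := by exact_mod_cast hd
  have he1pos : 0 < e1 := by rw [he1def]; positivity
  have he2pos : 0 < e2 := by rw [he2def]; positivity
  have he1le1 : e1 ≤ 1 := by
    rw [he1def]; rw [div_le_one (by linarith)]; linarith
  have he1le2 : e1 ≤ e2 := by
    rw [he1def, he2def]
    apply one_div_le_one_div_of_le (by linarith) (by linarith)
  set L : ℝ := logp ((n : ℝ) * lam ^ 2 * logp (n : ℝ) / (σ ^ 2 * α)) with hLdef
  set B : ℝ := σ ^ 2 / ((n : ℝ) * lam ^ 2) * L with hBdef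
  have hLone : 1 ≤ L := one_le_logp _
  have hinvρ : σ ^ 2 / ((n : ℝ) * lam ^ 2) = 1 / ρ := by
    rw [hρdef]; field_simp
  have hBpos : 0 < B := by
    rw [hBdef]
    exact mul_pos (by positivity) (logp_pos _)
  set T1' : ℝ := B ^ e1 with hT1'
  set T2' : ℝ := (logp (n : ℝ) / (n : ℝ)) ^ e2 with hT2'
  have hT1'pos : 0 < T1' := Real.rpow_pos_of_pos hBpos e1
  have hT2'nonneg : 0 ≤ T2' :=
    Real.rpow_nonneg (div_nonneg (logp_pos _).le hnR.le) e2
  set T1 : ℝ := (σ ^ 2 / ((n : ℝ) * lam ^ 2) * logp ((m₀ : ℝ) * logp (n : ℝ) / α)) ^ e1 with hT1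
  set T2 : ℝ := (logp (m₀ : ℝ) / (m₀ : ℝ)) ^ e2 with hT2
  -- goal : min 1 (C * (T1 + T2)) ≤ min 1 (4 * C * (T1' + T2'))
  by_cases hcase : 1 ≤ 4 * C * (T1' + T2')
  · rw [min_eq_left hcase]; exact min_le_left _ _
  push_neg at hcase
  rw [min_eq_right hcase.le]
  refine le_trans (min_le_right _ _) ?_
  -- In this case 2 * B ≤ 1.
  have h2B : 2 * B ≤ 1 := by
    by_contra hB2
    push_neg at hB2
    have hhalf : ((1:ℝ)/2) ^ (1:ℝ) ≤ ((1:ℝ)/2) ^ e1 :=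
      Real.rpow_le_rpow_of_exponent_ge (by norm_num) (by norm_num) he1le1
    rw [Real.rpow_one] at hhalf
    have hB12 : ((1:ℝ)/2) ^ e1 ≤ B ^ e1 :=
      Real.rpow_le_rpow (by norm_num) (by linarith) he1pos.le
    nlinarith [hT1'pos]
  have hB' : B = L / ρ := by rw [hBdef, hinvρ]; ring
  have h2L : 2 * L ≤ ρ := by
    have h := h2B
    rw [hB'] at h
    calc 2 * L = (2 * (L / ρ)) * ρ := by field_simp
      _ ≤ 1 * ρ := mul_le_mul_of_nonneg_right h hρ.le
      _ = ρ := one_mul ρ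
  have hρ1 : 1 ≤ ρ := by linarith
  have hm2ρ : (m₀ : ℝ) ≤ 2 * ρ := by
    have h1 : (m₀ : ℝ) ≤ (⌈ρ⌉₊ : ℝ) := by
      exact_mod_cast Nat.cast_le.mpr (min_le_right n ⌈ρ⌉₊)
    have h2 : (⌈ρ⌉₊ : ℝ) < ρ + 1 := Nat.ceil_lt_add_one hρ.le
    linarith
  have hαpos := hα.1
  have hα1 := hα.2
  have hlogn := one_le_logp (n : ℝ)
  -- the argument equality
  have hargeq : ρ * logp (n : ℝ) / α = (n : ℝ) * lam ^ 2 * logp (n : ℝ) / (σ ^ 2 * α) := by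
    rw [hρdef]; field_simp
  have hargpos : 0 < ρ * logp (n : ℝ) / α :=
    div_pos (mul_pos hρ (logp_pos _)) hαpos
  -- Bound T1 ≤ 2 * T1'
  have hT1le : T1 ≤ 2 * T1' := by
    have hb1 : (m₀ : ℝ) * logp (n : ℝ) / α ≤ 2 * (ρ * logp (n : ℝ) / α) := by
      have heq : 2 * (ρ * logp (n : ℝ) / α) = (2 * ρ) * logp (n : ℝ) / α := by ring
      have hmul : (m₀ : ℝ) * logp (n : ℝ) ≤ (2 * ρ) * logp (n : ℝ) :=
        mul_le_mul_of_nonneg_right hm2ρ (logp_pos _).le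
      rw [heq]
      exact div_le_div_of_nonneg_right hmul hαpos.le
    have hb2 : logp ((m₀ : ℝ) * logp (n : ℝ) / α) ≤ 2 * L := by
      calc logp ((m₀ : ℝ) * logp (n : ℝ) / α)
          ≤ logp (2 * (ρ * logp (n : ℝ) / α)) := logp_mono hb1
        _ ≤ 2 * logp (ρ * logp (n : ℝ) / α) := logp_two_mul hargpos
        _ = 2 * L := by rw [hLdef, hargeq]
    have hb3 : σ ^ 2 / ((n : ℝ) * lam ^ 2) * logp ((m₀ : ℝ) * logp (n : ℝ) / α)
        ≤ 2 * B := by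
      rw [hBdef]
      have hpos : 0 ≤ σ ^ 2 / ((n : ℝ) * lam ^ 2) := by positivity
      nlinarith
    calc T1 ≤ (2 * B) ^ e1 := by
          rw [hT1]
          exact Real.rpow_le_rpow (mul_nonneg (by positivity) (logp_pos _).le)
            hb3 he1pos.le
      _ = 2 ^ e1 * B ^ e1 := Real.mul_rpow (by norm_num) hBpos.le
      _ ≤ 2 * T1' := by
          have h2e : (2:ℝ) ^ e1 ≤ 2 ^ (1:ℝ) :=
            Real.rpow_le_rpow_of_exponent_le (by norm_num) he1le1
          rw [Real.rpow_one] at h2e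
          rw [hT1']
          nlinarith [Real.rpow_nonneg hBpos.le e1]
  -- Bound T2
  have hT2le : T2 ≤ 2 * T1' + T2' := by
    rcases min_cases n ⌈ρ⌉₊ with ⟨he, _⟩ | ⟨he, _⟩
    · -- m₀ = n
      have : T2 = T2' := by rw [hT2, hT2', hm₀def, he]
      linarith [hT1'pos]
    · -- m₀ = ⌈ρ⌉₊, so ρ ≤ m₀ ≤ 2ρ
      have hρm : ρ ≤ (m₀ : ℝ) := by
        rw [hm₀def, he]; exact Nat.le_ceil ρ
      have hm0pos : (0:ℝ) < (m₀ : ℝ) := lt_of_lt_of_le (by linarith) hρm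
      have hlm : logp (m₀ : ℝ) ≤ 2 * L := by
        calc logp (m₀ : ℝ) ≤ logp (2 * ρ) := logp_mono hm2ρ
          _ ≤ 2 * logp ρ := logp_two_mul hρ
          _ ≤ 2 * L := by
              have : logp ρ ≤ L := by
                rw [hLdef, ← hargeq]
                apply logp_mono
                rw [le_div_iff₀ hαpos]
                nlinarith
              linarith
      have hbase : logp (m₀ : ℝ) / (m₀ : ℝ) ≤ 2 * B := by
        have h1 : logp (m₀ : ℝ) / (m₀ : ℝ) ≤ 2 * L / ρ := by
          apply div_le_div₀ (by linarith : (0:ℝ) ≤ 2 * L) hlm hρ hρm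
        have h2 : 2 * L / ρ = 2 * B := by
          rw [hBdef, hinvρ]; ring
        linarith
      calc T2 ≤ (2 * B) ^ e2 := by
            rw [hT2]
            exact Real.rpow_le_rpow (div_nonneg (logp_pos _).le hm0pos.le)
              hbase he2pos.le
        _ ≤ (2 * B) ^ e1 :=
            Real.rpow_le_rpow_of_exponent_ge (by linarith) h2B he1le2
        _ = 2 ^ e1 * B ^ e1 := Real.mul_rpow (by norm_num) hBpos.le
        _ ≤ 2 * T1' + T2' := by
            have h2e : (2:ℝ) ^ e1 ≤ 2 ^ (1:ℝ) :=
              Real.rpow_le_rpow_of_exponent_le (by norm_num) he1le1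
            rw [Real.rpow_one] at h2e
            rw [hT1']
            nlinarith [Real.rpow_nonneg hBpos.le e1]
  have hT2nonneg : 0 ≤ T2 :=
    Real.rpow_nonneg (div_nonneg (logp_pos _).le (Nat.cast_nonneg _)) e2
  have hT1nonneg : 0 ≤ T1 :=
    Real.rpow_nonneg (mul_nonneg (by positivity) (logp_pos _).le) e1
  have hsum : T1 + T2 ≤ 4 * (T1' + T2') := by linarith
  have hmul := mul_le_mul_of_nonneg_left hsum (by linarith : (0:ℝ) ≤ C)
  linarith
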